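/- Every simple game on n voters can be written as a finite union of weighted games, i.e., there exist weighted games v_1,...,v_k with v(S)=max_j v_j(S) for all S⊆N. -/
import Mathlib


open Finset

def IsSimpleGame {n : ℕ} (v : Finset (Fin n) → ℕ) : Prop :=
  (∀ S, v S = 0 ∨ v S = 1) ∧ (∀ S T : Finset (Fin n), S ⊆ T → v S ≤ v T) ∧
    (∃ S, v S = 0) ∧ (∃ S, v S = 1)

def IsWeighted {n : ℕ} (v : Finset (Fin n) → ℕ) : Prop :=
  ∃ (w : Fin n → ℝ) (q : ℝ), (∀ i, 0 ≤ w i) ∧ 0 < q ∧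
    ∀ S : Finset (Fin n), v S = 1 ↔ q ≤ ∑ i ∈ S, w i

noncomputable def wg {n : ℕ} (q : ℝ) (w : Fin n → ℝ) (S : Finset (Fin n)) : ℕ :=
  if q ≤ ∑ i ∈ S, w i then 1 else 0

def Dominates {n : ℕ} (v : Finset (Fin n) → ℕ) (i j : Fin n) : Prop :=
  ∀ S : Finset (Fin n), i ∉ S → j ∉ S → v (insert j S) ≤ v (insert i S)

noncomputable def SSI {n : ℕ} (v : Finset (Fin n) → ℕ) (i : Fin n) : ℝ :=
  ∑ S ∈ (univ.erase i).powerset,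
    ((S.card.factorial * (n - S.card - 1).factorial : ℕ) : ℝ) / (n.factorial : ℝ) *
      ((v (insert i S) : ℝ) - (v S : ℝ))

def eta {n : ℕ} (v : Finset (Fin n) → ℕ) (i : Fin n) : ℤ :=
  ∑ S ∈ (univ.erase i).powerset, ((v (insert i S) : ℤ) - (v S : ℤ))

noncomputable def PBI {n : ℕ} (v : Finset (Fin n) → ℕ) (i : Fin n) : ℝ :=
  ((eta v i : ℤ) : ℝ) / ∑ j, ((eta v j : ℤ) : ℝ)

lemma aux_sum_indicator {n : ℕ} (T S : Finset (Fin n)) :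
    ∑ i ∈ S, (if i ∈ T then (1:ℝ) else 0) = ((S ∩ T).card : ℝ) := by
  rw [Finset.sum_ite_mem, Finset.sum_const, nsmul_eq_mul, mul_one]

lemma aux_foldr_le_one {L : List ℕ} (h01 : ∀ x ∈ L, x = 0 ∨ x = 1) :
    L.foldr max 0 ≤ 1 := by
  induction L with
  | nil => simp
  | cons a t ih =>
    simp only [List.foldr_cons, max_le_iff]
    exact ⟨by rcases h01 a (by simp) with rfl | rfl <;> simp,
      ih (fun y hy => h01 y (List.mem_cons_of_mem _ hy))⟩

lemma aux_mem_le_foldr {L : List ℕ} {x : ℕ} (hx : x ∈ L) : x ≤ L.foldr max 0 := by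
  induction L with
  | nil => simp at hx
  | cons a t ih =>
    rcases List.mem_cons.1 hx with rfl | hxt
    · exact le_max_left _ _
    · exact le_trans (ih hxt) (le_max_right _ _)

lemma aux_foldr_max_one {L : List ℕ} (h : ∃ x ∈ L, x = 1) (h01 : ∀ x ∈ L, x = 0 ∨ x = 1) :
    L.foldr max 0 = 1 := by
  obtain ⟨x, hx, rfl⟩ := h
  have h1 := aux_mem_le_foldr hx
  have h2 := aux_foldr_le_one h01
  omega

lemma aux_foldr_max_zero {L : List ℕ} (h : ∀ x ∈ L, x = 0) :
    L.foldr max 0 = 0 := by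
  induction L with
  | nil => simp
  | cons a t ih =>
    simp only [List.foldr_cons, h a (by simp), ih (fun y hy => h y (by simp [hy])), max_self]

theorem stmt3 (n : ℕ) (v : Finset (Fin n) → ℕ) (hv : IsSimpleGame v) :
    ∃ L : List (Finset (Fin n) → ℕ), L ≠ [] ∧ (∀ u ∈ L, IsWeighted u) ∧
      ∀ S, v S = (L.map (fun u => u S)).foldr max 0 := by
  obtain ⟨h01, hmono, ⟨S0, hS0⟩, ⟨S1, hS1⟩⟩ := hv
  have hempty : v ∅ = 0 := by
    rcases h01 ∅ with h | h
    · exact h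
    · have := hmono ∅ S0 (Finset.empty_subset _)
      omega
  set W : Finset (Finset (Fin n)) := Finset.univ.filter (fun T => v T = 1) with hW
  have hS1W : S1 ∈ W := by simp [hW, hS1]
  refine ⟨W.toList.map (fun T S => if T ⊆ S then 1 else 0), ?_, ?_, ?_⟩
  · simp only [ne_eq, List.map_eq_nil_iff, Finset.toList_eq_nil]
    intro h
    rw [h] at hS1W; simp at hS1W
  · intro u hu
    simp only [List.mem_map, Finset.mem_toList] at hu
    obtain ⟨T, hT, rfl⟩ := hu
    have hTne : T.Nonempty := by
      rcases T.eq_empty_or_nonempty with rfl | h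
      · simp [hW] at hT; omega
      · exact h
    refine ⟨fun i => if i ∈ T then 1 else 0, (T.card : ℝ), fun i => by positivity, ?_, ?_⟩
    · exact_mod_cast Finset.card_pos.2 hTne
    · intro S
      rw [aux_sum_indicator, Nat.cast_le]
      constructor
      · intro h
        have hTS : T ⊆ S := by
          by_contra hc
          simp [hc] at h
        have : S ∩ T = T := Finset.inter_eq_right.2 hTS
        rw [this]
      · intro h
        have hTS : T ⊆ S := by
          have h1 : S ∩ T ⊆ T := Finset.inter_subset_right
          have := Finset.eq_of_subset_of_card_le h1 h
          rw [← this]; exact Finset.inter_subset_left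
        simp [hTS]
  · intro S
    rw [List.map_map]
    rcases h01 S with h | h
    · rw [h, eq_comm]
      apply aux_foldr_max_zero
      intro x hx
      simp only [List.mem_map, Finset.mem_toList, Function.comp] at hx
      obtain ⟨T, hT, rfl⟩ := hx
      by_cases hTS : T ⊆ S
      swap
      · simp [hTS]
      have := hmono T S hTS
      simp [hW] at hT
      omega
    · rw [h, eq_comm]
      apply aux_foldr_max_one
      · refine ⟨1, ?_, rfl⟩
        simp only [List.mem_map, Finset.mem_toList, Function.comp]
        refine ⟨S, by simp [hW, h], by simp⟩
      · intro x hx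
        simp only [List.mem_map] at hx
        obtain ⟨T, _, rfl⟩ := hx
        simp only [Function.comp]
        split <;> simp
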